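/- Let 1 ≤ p < ∞, let ρ : [0,1] → ℝ be bounded and measurable, and let y ∈ (0,1). Then for every x ∈ [0,1], H_y(ρ, x) − G_y(ρ, x) = 2 ∫₀¹ ω(ρ, (1−y)x + yt, y) dt, and consequently ‖H_y(ρ) − G_y(ρ)‖_p ≤ 4 (1 − y)^{−1/p} τ(ρ, y)_p. (Intermediate claim in the proof of Theorem 4.1.) -/

import Mathlib

open MeasureTheory Set Real

/-- Local modulus of continuity of `ρ` at `x` with radius `δ`, relative to `[0,1]`. -/
noncomputable def omegaMod (ρ : ℝ → ℝ) (x δ : ℝ) : ℝ :=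
  sSup {d : ℝ | ∃ u ∈ Icc (x - δ) (x + δ) ∩ Icc (0:ℝ) 1,
    ∃ v ∈ Icc (x - δ) (x + δ) ∩ Icc (0:ℝ) 1, d = |ρ u - ρ v|}

/-- One-sided operator `G_y`. -/
noncomputable def Gop (y : ℝ) (ρ : ℝ → ℝ) (x : ℝ) : ℝ :=
  ∫ t in (0:ℝ)..1, (ρ ((1 - y) * x + y * t) - omegaMod ρ ((1 - y) * x + y * t) y)

/-- One-sided operator `H_y`. -/
noncomputable def Hop (y : ℝ) (ρ : ℝ → ℝ) (x : ℝ) : ℝ :=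
  ∫ t in (0:ℝ)..1, (ρ ((1 - y) * x + y * t) + omegaMod ρ ((1 - y) * x + y * t) y)

/-- `L^p` norm on `[0,1]`. -/
noncomputable def lpNorm (p : ℝ) (f : ℝ → ℝ) : ℝ :=
  (∫ x in (0:ℝ)..1, |f x| ^ p) ^ (1 / p)

/-- Averaged modulus of smoothness `τ(ρ, δ)_p`. -/
noncomputable def tau (p : ℝ) (ρ : ℝ → ℝ) (δ : ℝ) : ℝ :=
  lpNorm p (fun x => omegaMod ρ x δ)

/-- The step function `Φ`. -/
noncomputable def stepPhi (x : ℝ) : ℝ := if 0 < x then 1 else 0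

/-- Operator `M_k` built from polynomials `P ≤ Φ ≤ Q`, applied to `f` with
`f x = f 0 + ∫_0^x g`. -/
noncomputable def Mop (P Q : Polynomial ℝ) (f0 : ℝ) (g : ℝ → ℝ) (x : ℝ) : ℝ :=
  f0 + (∫ t in (0:ℝ)..1, P.eval (x - t) * max (g t) 0)
     - ∫ t in (0:ℝ)..1, Q.eval (x - t) * max (-g t) 0

/-- Operator `N_k` built from polynomials `P ≤ Φ ≤ Q`, applied to `f` with
`f x = f 0 + ∫_0^x g`. -/
noncomputable def Nop (P Q : Polynomial ℝ) (f0 : ℝ) (g : ℝ → ℝ) (x : ℝ) : ℝ :=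
  f0 + (∫ t in (0:ℝ)..1, Q.eval (x - t) * max (g t) 0)
     - ∫ t in (0:ℝ)..1, P.eval (x - t) * max (-g t) 0

/-- Degree of best one-sided approximation by polynomials of degree at most `k`. -/
noncomputable def bestE (p : ℝ) (k : ℕ) (ρ : ℝ → ℝ) : ℝ :=
  sInf {c : ℝ | ∃ P Q : Polynomial ℝ, P.natDegree ≤ k ∧ Q.natDegree ≤ k ∧
    (∀ x ∈ Icc (0:ℝ) 1, P.eval x ≤ ρ x ∧ ρ x ≤ Q.eval x) ∧
    c = lpNorm p (fun x => Q.eval x - P.eval x)}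

private lemma mem_Icc_iff_abs' {x u y : ℝ} : u ∈ Icc (x - y) (x + y) ↔ |x - u| ≤ y := by
  rw [mem_Icc, abs_le]; constructor <;> (intro h; constructor <;> linarith [h.1, h.2])

private lemma measSet_aux {y : ℝ} (hy : 0 < y) {E : Set ℝ} (hE : MeasurableSet E) :
    MeasurableSet {x : ℝ | ∃ u ∈ E, |x - u| ≤ y} := by
  have heq : {x : ℝ | ∃ u ∈ E, |x - u| ≤ y}
      = ({x : ℝ | ∃ u ∈ E, |x - u| < y} ∪ ((fun x => x - y) ⁻¹' E)) ∪ ((fun x => x + y) ⁻¹' E) := by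
    ext x
    simp only [mem_setOf_eq, mem_union, mem_preimage]
    constructor
    · rintro ⟨u, hu, hle⟩
      rcases lt_or_eq_of_le hle with h | h
      · exact Or.inl (Or.inl ⟨u, hu, h⟩)
      · rcases (abs_eq hy.le).mp h with h' | h'
        · exact Or.inl (Or.inr (by rw [show x - y = u by linarith]; exact hu))
        · exact Or.inr (by rw [show x + y = u by linarith]; exact hu)
    · rintro ((⟨u, hu, hlt⟩ | h) | h)
      · exact ⟨u, hu, hlt.le⟩
      · exact ⟨x - y, h, by rw [show x - (x - y) = y by ring, abs_of_nonneg hy.le]⟩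
      · exact ⟨x + y, h, by rw [show x - (x + y) = -y by ring, abs_neg, abs_of_nonneg hy.le]⟩
  rw [heq]
  refine (MeasurableSet.union ?_ ((measurable_id.sub_const y) hE)).union
    ((measurable_id.add_const y) hE)
  have : {x : ℝ | ∃ u ∈ E, |x - u| < y} = ⋃ u ∈ E, Metric.ball u y := by
    ext x; simp [Metric.mem_ball, Real.dist_eq]
  rw [this]
  exact (isOpen_biUnion fun u _ => Metric.isOpen_ball).measurableSet

private lemma omega_nonneg {ρ : ℝ → ℝ} {M : ℝ} (hM : ∀ x ∈ Icc (0:ℝ) 1, |ρ x| ≤ M)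
    (x y : ℝ) : 0 ≤ omegaMod ρ x y := by
  unfold omegaMod
  rcases eq_empty_or_nonempty {d : ℝ | ∃ u ∈ Icc (x - y) (x + y) ∩ Icc (0:ℝ) 1,
      ∃ v ∈ Icc (x - y) (x + y) ∩ Icc (0:ℝ) 1, d = |ρ u - ρ v|} with h | h
  · rw [h, Real.sSup_empty]
  · obtain ⟨d, u, hu, v, hv, rfl⟩ := h
    refine le_csSup ⟨2 * M, ?_⟩ ⟨u, hu, u, hu, by simp⟩
    rintro d ⟨a, ha, b, hb, rfl⟩
    have h1 := hM a ha.2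
    have h2 := hM b hb.2
    have := abs_sub (ρ a) (ρ b)
    calc |ρ a - ρ b| ≤ |ρ a| + |ρ b| := abs_sub _ _
      _ ≤ 2 * M := by linarith

private lemma omega_le {ρ : ℝ → ℝ} {M : ℝ} (hM : ∀ x ∈ Icc (0:ℝ) 1, |ρ x| ≤ M)
    (hMnn : 0 ≤ M) (x y : ℝ) : omegaMod ρ x y ≤ 2 * M := by
  apply Real.sSup_le _ (by linarith)
  rintro d ⟨a, ha, b, hb, rfl⟩
  have h1 := hM a ha.2
  have h2 := hM b hb.2
  calc |ρ a - ρ b| ≤ |ρ a| + |ρ b| := abs_sub _ _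
    _ ≤ 2 * M := by linarith

private lemma omega_meas {ρ : ℝ → ℝ} (hmeas : Measurable ρ) {M : ℝ}
    (hM : ∀ x ∈ Icc (0:ℝ) 1, |ρ x| ≤ M) {y : ℝ} (hy : 0 < y) :
    Measurable (fun x => omegaMod ρ x y) := by
  have hbdd : ∀ x : ℝ, BddAbove {d : ℝ | ∃ u ∈ Icc (x - y) (x + y) ∩ Icc (0:ℝ) 1,
      ∃ v ∈ Icc (x - y) (x + y) ∩ Icc (0:ℝ) 1, d = |ρ u - ρ v|} := by
    intro x
    refine ⟨2 * M, ?_⟩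
    rintro d ⟨a, ha, b, hb, rfl⟩
    have h1 := hM a ha.2
    have h2 := hM b hb.2
    calc |ρ a - ρ b| ≤ |ρ a| + |ρ b| := abs_sub _ _
      _ ≤ 2 * M := by linarith
  apply measurable_of_Ioi
  intro c
  rcases lt_or_ge c 0 with hc | hc
  · have : (fun x => omegaMod ρ x y) ⁻¹' Ioi c = univ := by
      ext x
      simp only [mem_preimage, mem_Ioi, mem_univ, iff_true]
      exact lt_of_lt_of_le hc (omega_nonneg hM x y)
    rw [this]; exact MeasurableSet.univ
  · have key : (fun x => omegaMod ρ x y) ⁻¹' Ioi c =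
        ⋃ q : ℚ, ({x : ℝ | ∃ u ∈ {u : ℝ | u ∈ Icc (0:ℝ) 1 ∧ (q:ℝ) + c < ρ u}, |x - u| ≤ y} ∩
                  {x : ℝ | ∃ u ∈ {u : ℝ | u ∈ Icc (0:ℝ) 1 ∧ ρ u < (q:ℝ)}, |x - u| ≤ y}) := by
      ext x
      simp only [mem_preimage, mem_Ioi, mem_iUnion, mem_inter_iff, mem_setOf_eq]
      constructor
      · intro hx
        have hne : {d : ℝ | ∃ u ∈ Icc (x - y) (x + y) ∩ Icc (0:ℝ) 1,
            ∃ v ∈ Icc (x - y) (x + y) ∩ Icc (0:ℝ) 1, d = |ρ u - ρ v|}.Nonempty := by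
          by_contra h
          rw [Set.not_nonempty_iff_eq_empty] at h
          rw [show omegaMod ρ x y = _ from rfl] at hx
          unfold omegaMod at hx
          rw [h, Real.sSup_empty] at hx
          linarith
        obtain ⟨d, hd, hcd⟩ := (lt_csSup_iff (hbdd x) hne).mp hx
        obtain ⟨u, hu, v, hv, rfl⟩ := hd
        have key2 : ∀ a b : ℝ, a ∈ Icc (x - y) (x + y) ∩ Icc (0:ℝ) 1 →
            b ∈ Icc (x - y) (x + y) ∩ Icc (0:ℝ) 1 → c < ρ a - ρ b →
            ∃ q : ℚ, (∃ u', (u' ∈ Icc (0:ℝ) 1 ∧ (q:ℝ) + c < ρ u') ∧ |x - u'| ≤ y) ∧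
              (∃ v', (v' ∈ Icc (0:ℝ) 1 ∧ ρ v' < (q:ℝ)) ∧ |x - v'| ≤ y) := by
          intro a b haI hbI hab
          obtain ⟨q, hq1, hq2⟩ := exists_rat_btwn (show ρ b < ρ a - c by linarith)
          exact ⟨q, ⟨a, ⟨haI.2, by linarith⟩, mem_Icc_iff_abs'.mp haI.1⟩,
                 ⟨b, ⟨hbI.2, hq1⟩, mem_Icc_iff_abs'.mp hbI.1⟩⟩
        rcases lt_abs.mp hcd with h | h
        · exact key2 u v hu hv h
        · exact key2 v u hv hu (by linarith)
      · rintro ⟨q, ⟨u, ⟨huI, huq⟩, hxu⟩, ⟨v, ⟨hvI, hvq⟩, hxv⟩⟩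
        have hd : |ρ u - ρ v| ∈ {d : ℝ | ∃ u ∈ Icc (x - y) (x + y) ∩ Icc (0:ℝ) 1,
            ∃ v ∈ Icc (x - y) (x + y) ∩ Icc (0:ℝ) 1, d = |ρ u - ρ v|} :=
          ⟨u, ⟨mem_Icc_iff_abs'.mpr hxu, huI⟩, v, ⟨mem_Icc_iff_abs'.mpr hxv, hvI⟩, rfl⟩
        calc c < ρ u - ρ v := by linarith
          _ ≤ |ρ u - ρ v| := le_abs_self _
          _ ≤ omegaMod ρ x y := le_csSup (hbdd x) hd
    rw [key]
    refine MeasurableSet.iUnion fun q => (measSet_aux hy ?_).inter (measSet_aux hy ?_)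
    · exact measurableSet_Icc.inter (hmeas measurableSet_Ioi)
    · exact measurableSet_Icc.inter (hmeas measurableSet_Iio)

/-- A globally bounded measurable function is interval integrable on any interval. -/
private lemma intBdd {f : ℝ → ℝ} {C : ℝ} (hf : Measurable f) (hC : ∀ u, |f u| ≤ C)
    (a b : ℝ) : IntervalIntegrable f volume a b := by
  rw [intervalIntegrable_iff]
  haveI : IsFiniteMeasure (volume.restrict (Set.uIoc a b)) := by
    constructor
    rw [Measure.restrict_apply_univ]
    exact measure_Ioc_lt_top
  exact (integrable_const C).mono' hf.aestronglyMeasurable.restrict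
    (ae_of_all _ (by simpa using hC))


/-- Intermediate claim in the proof of Theorem 4.1. -/
theorem stmt8 (p : ℝ) (hp : 1 ≤ p) (ρ : ℝ → ℝ) (hmeas : Measurable ρ)
    (hbdd : ∃ M : ℝ, ∀ x ∈ Icc (0:ℝ) 1, |ρ x| ≤ M)
    (y : ℝ) (hy : y ∈ Ioo (0:ℝ) 1) :
    (∀ x ∈ Icc (0:ℝ) 1,
      Hop y ρ x - Gop y ρ x =
        2 * ∫ t in (0:ℝ)..1, omegaMod ρ ((1 - y) * x + y * t) y) ∧
    lpNorm p (fun x => Hop y ρ x - Gop y ρ x) ≤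
      4 * (1 - y) ^ (-(1 / p) : ℝ) * tau p ρ y := by
  obtain ⟨M₀, hM₀⟩ := hbdd
  obtain ⟨hy0, hy1⟩ := hy
  have hp0 : (0:ℝ) < p := lt_of_lt_of_le one_pos hp
  set M : ℝ := max M₀ 0 with hMdef
  have hM : ∀ x ∈ Icc (0:ℝ) 1, |ρ x| ≤ M := fun x hx => (hM₀ x hx).trans (le_max_left _ _)
  have hMnn : (0:ℝ) ≤ M := le_max_right _ _
  have hw0 : ∀ u, 0 ≤ omegaMod ρ u y := fun u => omega_nonneg hM u y
  have hwB : ∀ u, omegaMod ρ u y ≤ 2 * M := fun u => omega_le hM hMnn u y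
  have hwm : Measurable (fun u => omegaMod ρ u y) := omega_meas hmeas hM hy0
  have hwabs : ∀ u, |omegaMod ρ u y| ≤ 2 * M := fun u => by
    rw [abs_of_nonneg (hw0 u)]; exact hwB u
  -- the affine map lands in [0,1]
  have hmemℓ : ∀ x ∈ Icc (0:ℝ) 1, ∀ t ∈ Icc (0:ℝ) 1, (1 - y) * x + y * t ∈ Icc (0:ℝ) 1 := by
    intro x hx t ht
    have h1 : 0 ≤ (1 - y) * x := mul_nonneg (by linarith) hx.1
    have h2 : 0 ≤ y * t := mul_nonneg hy0.le ht.1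
    have h3 : (1 - y) * x ≤ (1 - y) * 1 := mul_le_mul_of_nonneg_left hx.2 (by linarith)
    have h4 : y * t ≤ y * 1 := mul_le_mul_of_nonneg_left ht.2 hy0.le
    constructor <;> [linarith; nlinarith]
  have hρint : ∀ x ∈ Icc (0:ℝ) 1,
      IntervalIntegrable (fun t => ρ ((1 - y) * x + y * t)) volume 0 1 := by
    intro x hx
    rw [intervalIntegrable_iff_integrableOn_Ioc_of_le zero_le_one]
    refine (integrable_const M).mono'
      ((hmeas.comp (measurable_const.add (measurable_id.const_mul y))).aestronglyMeasurable.restrict) ?_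
    filter_upwards [ae_restrict_mem measurableSet_Ioc] with t ht
    simpa using hM _ (hmemℓ x hx t ⟨ht.1.le, ht.2⟩)
  have hwint : ∀ x : ℝ,
      IntervalIntegrable (fun t => omegaMod ρ ((1 - y) * x + y * t) y) volume 0 1 := fun x =>
    intBdd (hwm.comp (measurable_const.add (measurable_id.const_mul y)))
      (fun t => hwabs _) 0 1
  -- Part 1
  have part1 : ∀ x ∈ Icc (0:ℝ) 1, Hop y ρ x - Gop y ρ x =
      2 * ∫ t in (0:ℝ)..1, omegaMod ρ ((1 - y) * x + y * t) y := by
    intro x hx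
    have h1 := hρint x hx
    have h2 := hwint x
    unfold Hop Gop
    rw [intervalIntegral.integral_add h1 h2, intervalIntegral.integral_sub h1 h2]
    ring
  refine ⟨part1, ?_⟩
  -- ===== Part 2 =====
  have hwabs2 : ∀ u : ℝ, |(|omegaMod ρ u y| ^ p)| ≤ (2*M) ^ p := fun u => by
    rw [abs_of_nonneg (Real.rpow_nonneg (abs_nonneg _) p)]
    exact Real.rpow_le_rpow (abs_nonneg _) (hwabs u) hp0.le
  have hW0 : ∀ u : ℝ, (0:ℝ) ≤ |omegaMod ρ u y| ^ p := fun u => Real.rpow_nonneg (abs_nonneg _) p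
  have hWm : Measurable (fun u => |omegaMod ρ u y| ^ p) := (hwm.abs).pow measurable_const
  set μ : Measure ℝ := volume.restrict (Ioc (0:ℝ) 1) with hμ
  haveI hprob : IsProbabilityMeasure μ := ⟨by rw [hμ, Measure.restrict_apply_univ]; simp⟩
  have hIoc : ∀ g : ℝ → ℝ, (∫ t in (0:ℝ)..1, g t) = ∫ t, g t ∂μ := fun g =>
    intervalIntegral.integral_of_le zero_le_one
  have intμ : ∀ (f : ℝ → ℝ) (C : ℝ), Measurable f → (∀ u, |f u| ≤ C) → Integrable f μ := by
    intro f C hf hC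
    exact (integrable_const C).mono' hf.aestronglyMeasurable (ae_of_all _ (by simpa using hC))
  -- Jensen's inequality pointwise in x
  have jensen : ∀ x : ℝ, (∫ t in (0:ℝ)..1, omegaMod ρ ((1-y)*x + y*t) y) ^ p
      ≤ ∫ t in (0:ℝ)..1, |omegaMod ρ ((1-y)*x + y*t) y| ^ p := by
    intro x
    rw [hIoc, hIoc]
    have habs : (fun t => |omegaMod ρ ((1-y)*x + y*t) y| ^ p)
        = fun t => (omegaMod ρ ((1-y)*x + y*t) y) ^ p := funext fun t => by
      rw [abs_of_nonneg (hw0 _)]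
    rw [habs]
    exact (convexOn_rpow hp).map_integral_le
      (fun z hz => (Real.continuousAt_rpow_const z p (Or.inr (by linarith))).continuousWithinAt)
      isClosed_Ici (ae_of_all _ fun t => hw0 _)
      (intμ _ (2*M) (hwm.comp (measurable_const.add (measurable_id.const_mul y)))
        fun t => hwabs _)
      (intμ _ ((2*M)^p)
        (((hwm.comp (measurable_const.add (measurable_id.const_mul y))).pow
          measurable_const)) fun t => by
          rw [Function.comp_apply, abs_of_nonneg (Real.rpow_nonneg (hw0 _) p)]
          exact Real.rpow_le_rpow (hw0 _) (hwB _) hp0.le)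
  -- product integrability for Fubini
  have hFint : Integrable (Function.uncurry fun x t => |omegaMod ρ ((1-y)*x + y*t) y| ^ p)
      (μ.prod μ) := by
    refine (integrable_const ((2*M)^p)).mono' ?_ (ae_of_all _ ?_)
    · exact (hWm.comp ((measurable_fst.const_mul (1-y)).add
        (measurable_snd.const_mul y))).aestronglyMeasurable
    · rintro ⟨x, t⟩
      simpa [Function.uncurry] using hwabs2 ((1-y)*x + y*t)
  set A : ℝ := ∫ u in (0:ℝ)..1, |omegaMod ρ u y| ^ p with hAdef
  have hA0 : 0 ≤ A := intervalIntegral.integral_nonneg zero_le_one fun u _ => hW0 u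
  have intW : ∀ a b : ℝ, IntervalIntegrable (fun u => |omegaMod ρ u y| ^ p) volume a b :=
    intBdd hWm hwabs2
  have hsub : ∀ a b : ℝ, 0 ≤ a → a ≤ b → b ≤ 1 →
      (∫ u in a..b, |omegaMod ρ u y| ^ p) ≤ A := by
    intro a b h0a hab hb1
    have e1 := intervalIntegral.integral_add_adjacent_intervals (intW 0 a) (intW a b)
    have e2 := intervalIntegral.integral_add_adjacent_intervals (intW 0 b) (intW b 1)
    have n1 : 0 ≤ ∫ u in (0:ℝ)..a, |omegaMod ρ u y| ^ p :=
      intervalIntegral.integral_nonneg h0a fun u _ => hW0 u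
    have n2 : 0 ≤ ∫ u in b..(1:ℝ), |omegaMod ρ u y| ^ p :=
      intervalIntegral.integral_nonneg hb1 fun u _ => hW0 u
    rw [hAdef]
    linarith
  have h1y : (1:ℝ) - y ≠ 0 := by linarith
  have h1y0 : (0:ℝ) ≤ 1 - y := by linarith
  -- the Fubini + change-of-variables bound
  have key2 : (∫ x in (0:ℝ)..1, ∫ t in (0:ℝ)..1, |omegaMod ρ ((1-y)*x + y*t) y| ^ p)
      ≤ (1-y)⁻¹ * A := by
    simp only [hIoc]
    refine le_trans (le_of_eq (MeasureTheory.integral_integral_swap hFint)) ?_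
    have hbound : ∀ᵐ t ∂μ, (∫ x, |omegaMod ρ ((1-y)*x + y*t) y| ^ p ∂μ) ≤ (1-y)⁻¹ * A := by
      filter_upwards [ae_restrict_mem measurableSet_Ioc] with t ht
      have hCoV := intervalIntegral.integral_comp_mul_add (a := (0:ℝ)) (b := 1)
        (fun u => |omegaMod ρ u y| ^ p) h1y (y*t)
      rw [show (1-y)*(0:ℝ) + y*t = y*t by ring, show (1-y)*(1:ℝ) + y*t = (1-y) + y*t by ring]
        at hCoV
      rw [← hIoc]
      calc (∫ x in (0:ℝ)..1, |omegaMod ρ ((1-y)*x + y*t) y| ^ p)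
          = (1-y)⁻¹ • ∫ u in (y*t)..((1-y) + y*t), |omegaMod ρ u y| ^ p := hCoV
        _ = (1-y)⁻¹ * ∫ u in (y*t)..((1-y) + y*t), |omegaMod ρ u y| ^ p := smul_eq_mul _ _
        _ ≤ (1-y)⁻¹ * A := by
            refine mul_le_mul_of_nonneg_left ?_ (inv_nonneg.mpr h1y0)
            refine hsub (y*t) ((1-y) + y*t) (mul_nonneg hy0.le ht.1.le) (by linarith) ?_
            have : y * t ≤ y * 1 := mul_le_mul_of_nonneg_left ht.2 hy0.le
            linarith
    have hprodleft : Integrable (fun t => ∫ x, |omegaMod ρ ((1-y)*x + y*t) y| ^ p ∂μ) μ := by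
      have := hFint.integral_prod_right
      simpa [Function.uncurry] using this
    calc (∫ t, (∫ x, |omegaMod ρ ((1-y)*x + y*t) y| ^ p ∂μ) ∂μ)
        ≤ ∫ _t, (1-y)⁻¹ * A ∂μ :=
          integral_mono_ae hprodleft (integrable_const _) hbound
      _ = (1-y)⁻¹ * A := by simp
  -- integrability of the two integrands over x
  have hgint : Integrable (Function.uncurry fun x t => omegaMod ρ ((1-y)*x + y*t) y)
      (μ.prod μ) := by
    refine (integrable_const (2*M)).mono' ?_ (ae_of_all _ ?_)
    · exact (hwm.comp ((measurable_fst.const_mul (1-y)).add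
        (measurable_snd.const_mul y))).aestronglyMeasurable
    · rintro ⟨x, t⟩
      simpa [Function.uncurry] using hwabs ((1-y)*x + y*t)
  have hgg0 : ∀ x : ℝ, 0 ≤ ∫ t in (0:ℝ)..1, omegaMod ρ ((1-y)*x + y*t) y := fun x =>
    intervalIntegral.integral_nonneg zero_le_one fun t _ => hw0 _
  have hggB : ∀ x : ℝ, (∫ t in (0:ℝ)..1, omegaMod ρ ((1-y)*x + y*t) y) ≤ 2*M := by
    intro x
    calc (∫ t in (0:ℝ)..1, omegaMod ρ ((1-y)*x + y*t) y)
        ≤ ∫ _t in (0:ℝ)..1, 2*M := intervalIntegral.integral_mono_on zero_le_one (hwint x)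
          intervalIntegrable_const (fun t _ => hwB _)
      _ = 2*M := by simp
  have hggaesm : AEStronglyMeasurable (fun x => ∫ t in (0:ℝ)..1, omegaMod ρ ((1-y)*x + y*t) y) μ := by
    simp only [hIoc]
    have := hgint.integral_prod_left
    exact (by simpa [Function.uncurry] using this : Integrable
      (fun x => ∫ t, omegaMod ρ ((1-y)*x + y*t) y ∂μ) μ).aestronglyMeasurable
  have hptwise : ∀ x : ℝ, |2 * ∫ t in (0:ℝ)..1, omegaMod ρ ((1-y)*x + y*t) y| ^ p
      ≤ 2 ^ p * ∫ t in (0:ℝ)..1, |omegaMod ρ ((1-y)*x + y*t) y| ^ p := by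
    intro x
    rw [abs_of_nonneg (mul_nonneg (by norm_num) (hgg0 x)),
      Real.mul_rpow (by norm_num) (hgg0 x)]
    exact mul_le_mul_of_nonneg_left (jensen x) (Real.rpow_nonneg (by norm_num) p)
  have hLint : IntervalIntegrable
      (fun x => |2 * ∫ t in (0:ℝ)..1, omegaMod ρ ((1-y)*x + y*t) y| ^ p) volume 0 1 := by
    rw [intervalIntegrable_iff_integrableOn_Ioc_of_le zero_le_one]
    have hrpm : Measurable (fun z : ℝ => |z| ^ p) := measurable_abs.pow measurable_const
    refine (integrable_const ((2*(2*M))^p)).mono'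
      ((hrpm.comp_aemeasurable (hggaesm.aemeasurable.const_mul 2)).aestronglyMeasurable)
      (ae_of_all _ ?_)
    intro x
    rw [Real.norm_eq_abs, abs_of_nonneg (Real.rpow_nonneg (abs_nonneg _) p)]
    refine Real.rpow_le_rpow (abs_nonneg _) ?_ hp0.le
    rw [abs_of_nonneg (mul_nonneg (by norm_num) (hgg0 x))]
    have := hggB x
    linarith
  have hRint : IntervalIntegrable
      (fun x => 2 ^ p * ∫ t in (0:ℝ)..1, |omegaMod ρ ((1-y)*x + y*t) y| ^ p) volume 0 1 := by
    rw [intervalIntegrable_iff_integrableOn_Ioc_of_le zero_le_one]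
    have : Integrable (fun x => ∫ t in (0:ℝ)..1, |omegaMod ρ ((1-y)*x + y*t) y| ^ p) μ := by
      simp only [hIoc]
      have := hFint.integral_prod_left
      simpa [Function.uncurry] using this
    exact this.const_mul _
  have hInner : (∫ x in (0:ℝ)..1, |Hop y ρ x - Gop y ρ x| ^ p) ≤ 2 ^ p * ((1-y)⁻¹ * A) := by
    have e1 : (∫ x in (0:ℝ)..1, |Hop y ρ x - Gop y ρ x| ^ p)
        = ∫ x in (0:ℝ)..1, |2 * ∫ t in (0:ℝ)..1, omegaMod ρ ((1-y)*x + y*t) y| ^ p := by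
      apply intervalIntegral.integral_congr
      intro x hx
      rw [uIcc_of_le zero_le_one] at hx
      show |Hop y ρ x - Gop y ρ x| ^ p = _
      rw [part1 x hx]
    rw [e1]
    calc (∫ x in (0:ℝ)..1, |2 * ∫ t in (0:ℝ)..1, omegaMod ρ ((1-y)*x + y*t) y| ^ p)
        ≤ ∫ x in (0:ℝ)..1, 2 ^ p * ∫ t in (0:ℝ)..1, |omegaMod ρ ((1-y)*x + y*t) y| ^ p :=
          intervalIntegral.integral_mono_on zero_le_one hLint hRint (fun x _ => hptwise x)
      _ = 2 ^ p * ∫ x in (0:ℝ)..1, ∫ t in (0:ℝ)..1, |omegaMod ρ ((1-y)*x + y*t) y| ^ p :=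
          intervalIntegral.integral_const_mul _ _
      _ ≤ 2 ^ p * ((1-y)⁻¹ * A) :=
          mul_le_mul_of_nonneg_left key2 (Real.rpow_nonneg (by norm_num) p)
  have hLHS0 : 0 ≤ ∫ x in (0:ℝ)..1, |Hop y ρ x - Gop y ρ x| ^ p :=
    intervalIntegral.integral_nonneg zero_le_one fun x _ => Real.rpow_nonneg (abs_nonneg _) p
  have htau : tau p ρ y = A ^ (1/p) := rfl
  have step : lpNorm p (fun x => Hop y ρ x - Gop y ρ x) ≤ (2 ^ p * ((1-y)⁻¹ * A)) ^ (1/p) := by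
    unfold _root_.lpNorm
    exact Real.rpow_le_rpow hLHS0 hInner (by positivity)
  refine step.trans ?_
  have heq : ((2:ℝ) ^ p * ((1-y)⁻¹ * A)) ^ (1/p)
      = 2 * ((1-y) ^ (-(1/p) : ℝ) * A ^ (1/p)) := by
    rw [Real.mul_rpow (Real.rpow_nonneg (by norm_num) p) (mul_nonneg (inv_nonneg.mpr h1y0) hA0),
      Real.mul_rpow (inv_nonneg.mpr h1y0) hA0]
    congr 1
    · rw [← Real.rpow_mul (by norm_num : (0:ℝ) ≤ 2), mul_one_div_cancel (ne_of_gt hp0),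
        Real.rpow_one]
    · congr 1
      rw [← Real.rpow_neg_one (1-y), ← Real.rpow_mul h1y0]
      congr 1
      ring
  rw [heq, htau]
  have hτ0 : 0 ≤ A ^ (1/p) := Real.rpow_nonneg hA0 _
  have hpow0 : 0 ≤ (1-y) ^ (-(1/p):ℝ) := Real.rpow_nonneg h1y0 _
  nlinarith [mul_nonneg hpow0 hτ0]
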